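/- arXiv:1112.1968 — 2 statements merged into one kernel-verified Lean document; each statement's English description precedes it below -/
import Mathlib

section
/- Let a ∈ ℝ^N be a fixed nonzero vector, let P = P(a) be the M×M autocorrelation Toeplitz matrix of a, and let y ∈ ℝ^M be a zero-mean Gaussian random vector with covariance matrix P. Then for every ε ∈ (0,1), P( ‖y‖₂² ≤ M‖a‖₂² (1−ε) ) ≤ exp( − ε² M / (8 μ(a)) ). -/
open MeasureTheory Matrix Real Finset

/-- Un-normalized sample autocorrelation `R_a(τ) = ∑_{i=1}^{N-τ} a_i a_{i+τ}`. -/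
noncomputable def autocorr (N : ℕ) (a : Fin N → ℝ) (τ : ℕ) : ℝ :=
  ∑ i : Fin N, if h : i.1 + τ < N then a i * a ⟨i.1 + τ, h⟩ else 0

/-- The `M × M` symmetric Toeplitz covariance matrix `P(a)` with entries `R_a(|i-j|)`. -/
noncomputable def covToeplitz (N M : ℕ) (a : Fin N → ℝ) :
    Matrix (Fin M) (Fin M) ℝ :=
  fun i j => autocorr N a (Nat.dist i.1 j.1)

noncomputable def shiftMat (N M : ℕ) (a : Fin N → ℝ) : Matrix (Fin M) (Fin (N + M)) ℝ :=
  fun k t => if h : k.1 ≤ t.1 ∧ t.1 - k.1 < N then a ⟨t.1 - k.1, h.2⟩ else 0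

lemma shiftMat_entry_le (N M : ℕ) (a : Fin N → ℝ) (i j : Fin M) (hij : i.1 ≤ j.1) :
    ∑ t : Fin (N + M), shiftMat N M a i t * shiftMat N M a j t
      = autocorr N a (j.1 - i.1) := by
  classical
  set d := j.1 - i.1 with hd
  set f : Fin (N + M) → ℝ := fun t => shiftMat N M a i t * shiftMat N M a j t with hf
  have hjM := j.2
  set e : Fin N → Fin (N + M) := fun s => ⟨s.1 + j.1, by omega⟩ with he
  have hinj : Function.Injective e := by
    intro s1 s2 h
    apply Fin.ext
    have := congrArg Fin.val h
    simp only [e] at this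
    omega
  have h0 : ∀ t ∈ (univ : Finset (Fin (N + M))), t ∉ Finset.image e univ → f t = 0 := by
    intro t _ ht
    have hnot : ¬ (j.1 ≤ t.1 ∧ t.1 - j.1 < N) := by
      intro hcon
      apply ht
      refine Finset.mem_image.2 ⟨⟨t.1 - j.1, hcon.2⟩, Finset.mem_univ _, ?_⟩
      apply Fin.ext
      simp only [e]
      omega
    simp only [f, shiftMat]
    rw [dif_neg hnot, mul_zero]
  have step1 : ∑ t : Fin (N + M), f t = ∑ s : Fin N, f (e s) := by
    rw [← Finset.sum_subset (Finset.subset_univ (Finset.image e univ)) h0,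
      Finset.sum_image (fun s _ s' _ h => hinj h)]
  rw [step1]
  apply Finset.sum_congr rfl
  intro s _
  have hsN := s.2
  have hc2 : j.1 ≤ (e s).1 ∧ (e s).1 - j.1 < N := by simp only [e]; omega
  have hval2 : a ⟨(e s).1 - j.1, hc2.2⟩ = a s := by congr 1; apply Fin.ext; simp only [e]; omega
  by_cases hcase : s.1 + d < N
  · have hc1 : i.1 ≤ (e s).1 ∧ (e s).1 - i.1 < N := by simp only [e]; omega
    have hval1 : a ⟨(e s).1 - i.1, hc1.2⟩ = a ⟨s.1 + d, hcase⟩ := by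
      congr 1; apply Fin.ext; simp only [e]; omega
    simp only [f, shiftMat]
    rw [dif_pos hc1, dif_pos hc2, dif_pos hcase, hval1, hval2, mul_comm]
  · have hc1 : ¬ (i.1 ≤ (e s).1 ∧ (e s).1 - i.1 < N) := by simp only [e]; omega
    simp only [f, shiftMat]
    rw [dif_neg hc1, dif_neg hcase, zero_mul]

lemma covToeplitz_eq_mul (N M : ℕ) (a : Fin N → ℝ) :
    covToeplitz N M a = shiftMat N M a * (shiftMat N M a)ᵀ := by
  ext i j
  rw [Matrix.mul_apply]
  simp only [Matrix.transpose_apply]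
  rcases le_total i.1 j.1 with hij | hij
  · rw [shiftMat_entry_le N M a i j hij, covToeplitz, Nat.dist_eq_sub_of_le hij]
  · have := shiftMat_entry_le N M a j i hij
    rw [covToeplitz, Nat.dist_eq_sub_of_le_right hij, ← this]
    apply Finset.sum_congr rfl
    intro t _
    ring

lemma covToeplitz_posDef (N M : ℕ) (a : Fin N → ℝ) (ha : a ≠ 0) :
    (covToeplitz N M a).PosDef := by
  classical
  refine Matrix.PosDef.of_dotProduct_mulVec_pos ?_ ?_
  · ext i j
    simp only [Matrix.conjTranspose_apply, star_trivial, covToeplitz, Nat.dist_comm]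
  · intro x hx
    rw [covToeplitz_eq_mul N M a]
    have hstar : star x = x := by simp
    rw [hstar, ← Matrix.mulVec_mulVec, Matrix.dotProduct_mulVec, Matrix.mulVec_transpose]
    set w := x ᵥ* shiftMat N M a with hw
    -- show w ≠ 0
    have hPa : ∃ n, ∃ h : n < N, a ⟨n, h⟩ ≠ 0 := by
      rcases Function.ne_iff.1 ha with ⟨i, hi⟩
      exact ⟨i.1, i.2, by simpa using hi⟩
    have hPx : ∃ n, ∃ h : n < M, x ⟨n, h⟩ ≠ 0 := by
      rcases Function.ne_iff.1 hx with ⟨i, hi⟩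
      exact ⟨i.1, i.2, by simpa using hi⟩
    set i0 := Nat.find hPa with hi0
    set k0 := Nat.find hPx with hk0
    obtain ⟨hi0N, hai0⟩ := Nat.find_spec hPa
    obtain ⟨hk0M, hxk0⟩ := Nat.find_spec hPx
    set t0 : Fin (N + M) := ⟨k0 + i0, by omega⟩ with ht0
    have hwt0 : w t0 = x ⟨k0, hk0M⟩ * a ⟨i0, hi0N⟩ := by
      rw [hw]
      show ∑ k : Fin M, x k * shiftMat N M a k t0 = _
      rw [Finset.sum_eq_single (⟨k0, hk0M⟩ : Fin M)]
      · congr 1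
        simp only [shiftMat]
        rw [dif_pos (show k0 ≤ k0 + i0 ∧ k0 + i0 - k0 < N by omega)]
        congr 1; apply Fin.ext; show k0 + i0 - k0 = i0; omega
      · intro b _ hb
        rcases lt_or_gt_of_ne (fun h : b.1 = k0 => hb (Fin.ext h)) with hlt | hgt
        · have : x b = 0 := by
            by_contra hxb
            exact Nat.find_min hPx hlt ⟨b.2, by simpa using hxb⟩
          rw [this, zero_mul]
        · have : shiftMat N M a b t0 = 0 := by
            simp only [shiftMat]
            by_cases hc : b.1 ≤ t0.1 ∧ t0.1 - b.1 < N
            · rw [dif_pos hc]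
              have hc' : b.1 ≤ k0 + i0 ∧ k0 + i0 - b.1 < N := hc
              have hlt' : t0.1 - b.1 < i0 := show k0 + i0 - b.1 < i0 by omega
              by_contra hne
              exact Nat.find_min hPa hlt' ⟨hc.2, hne⟩
            · rw [dif_neg hc]
          rw [this, mul_zero]
      · intro h; exact absurd (Finset.mem_univ _) h
    have hwne : w ≠ 0 := by
      intro h
      rw [h] at hwt0
      exact mul_ne_zero hxk0 hai0 hwt0.symm
    have := dotProduct_self_star_pos_iff (v := w).2 hwne
    simpa using this

lemma exp_sub_half_sq_le (x : ℝ) (hx : 0 ≤ x) : Real.exp (x - x ^ 2 / 2) ≤ 1 + x := by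
  set g : ℝ → ℝ := fun y => (1 + y) * Real.exp (y ^ 2 / 2 - y) with hg
  have hderiv : ∀ y : ℝ, HasDerivAt g (Real.exp (y ^ 2 / 2 - y) * y ^ 2) y := by
    intro y
    have h1 : HasDerivAt (fun y : ℝ => 1 + y) 1 y := (hasDerivAt_id y).const_add 1
    have h2 : HasDerivAt (fun y : ℝ => y ^ 2 / 2 - y) (2 * y ^ 1 / 2 - 1) y :=
      ((hasDerivAt_pow 2 y).div_const 2).sub (hasDerivAt_id y)
    have h3 := h2.exp
    have h4 := h1.mul h3
    exact h4.congr_deriv (by ring)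
  have hmono : Monotone g :=
    monotone_of_deriv_nonneg (fun y => (hderiv y).differentiableAt)
      (fun y => by
        rw [(hderiv y).deriv]
        positivity)
  have h0 : g 0 = 1 := by simp [hg]
  have hge : 1 ≤ (1 + x) * Real.exp (x ^ 2 / 2 - x) := by
    calc 1 = g 0 := h0.symm
    _ ≤ g x := hmono hx
  have hprod : Real.exp (x - x ^ 2 / 2) * Real.exp (x ^ 2 / 2 - x) = 1 := by
    rw [← Real.exp_add]
    norm_num
  nlinarith [Real.exp_pos (x ^ 2 / 2 - x), Real.exp_pos (x - x ^ 2 / 2)]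

open scoped MatrixOrder in
lemma gauss_integral_aux {m : ℕ} (Q : Matrix (Fin m) (Fin m) ℝ) (hQ : Q.PosDef) :
    Integrable (fun v : Fin m → ℝ => Real.exp (-(1/2) * (v ⬝ᵥ Q *ᵥ v))) ∧
    ∫ v : Fin m → ℝ, Real.exp (-(1/2) * (v ⬝ᵥ Q *ᵥ v))
      = Real.sqrt ((2 * π) ^ m / Q.det) := by
  classical
  set C := CFC.sqrt Q with hC
  have hCps : C.PosSemidef := Matrix.nonneg_iff_posSemidef.mp (CFC.sqrt_nonneg Q)
  have hCH : C.IsHermitian := hCps.isHermitian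
  have hCC : C * C = Q := CFC.sqrt_mul_sqrt_self Q (Matrix.nonneg_iff_posSemidef.mpr hQ.posSemidef)
  have hCdet_nonneg : 0 ≤ C.det := by
    rw [hCH.det_eq_prod_eigenvalues]
    exact Finset.prod_nonneg fun i _ => by simpa using hCps.eigenvalues_nonneg i
  have hdetQ : C.det * C.det = Q.det := by rw [← Matrix.det_mul, hCC]
  have hdetQpos : (0 : ℝ) < Q.det := hQ.det_pos
  have hCdet0 : C.det ≠ 0 := by
    intro h
    rw [h, mul_zero] at hdetQ
    exact hdetQpos.ne' hdetQ.symm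
  have hCdet : Real.sqrt Q.det = C.det := by rw [← hdetQ, Real.sqrt_mul_self hCdet_nonneg]
  have hCT : Cᵀ = C := by
    have := hCH
    rwa [Matrix.IsHermitian, Matrix.conjTranspose_eq_transpose_of_trivial] at this
  have hquad : ∀ v : Fin m → ℝ, v ⬝ᵥ Q *ᵥ v = (C *ᵥ v) ⬝ᵥ (C *ᵥ v) := by
    intro v
    rw [← hCC, ← Matrix.mulVec_mulVec, Matrix.dotProduct_mulVec]
    congr 1
    rw [← hCT, Matrix.vecMul_transpose, hCT]
  set g : (Fin m → ℝ) → ℝ := fun w => ∏ k, Real.exp (-(1/2) * w k ^ 2) with hgdef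
  have hfg : ∀ v : Fin m → ℝ,
      Real.exp (-(1/2) * (v ⬝ᵥ Q *ᵥ v)) = g (Matrix.toLin' C v) := by
    intro v
    rw [hquad, Matrix.toLin'_apply]
    set w := C *ᵥ v
    rw [hgdef]
    simp only [dotProduct]
    rw [← Real.exp_sum]
    congr 1
    rw [Finset.mul_sum]
    apply Finset.sum_congr rfl
    intro k _
    ring
  have hg_int : Integrable g :=
    Integrable.fintype_prod (f := fun (_ : Fin m) (x : ℝ) => Real.exp (-(1/2) * x ^ 2))
      (fun _ => integrable_exp_neg_mul_sq (by norm_num))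
  have hg_cont : Continuous g := by
    apply continuous_finset_prod
    intro k _
    exact Real.continuous_exp.comp (by fun_prop)
  have hL : Continuous (Matrix.toLin' C) := LinearMap.continuous_on_pi _
  have hmap := Real.map_matrix_volume_pi_eq_smul_volume_pi (M := C) hCdet0
  have h1 : Integrable (fun v => g (Matrix.toLin' C v)) := by
    have hInt : Integrable g (Measure.map (Matrix.toLin' C) volume) := by
      rw [hmap]
      exact hg_int.smul_measure ENNReal.ofReal_ne_top
    exact (integrable_map_measure hg_cont.aestronglyMeasurable hL.aemeasurable).mp hInt
  have h2 : ∫ v, g (Matrix.toLin' C v) = |C.det⁻¹| * ∫ w, g w := by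
    rw [← integral_map hL.aemeasurable hg_cont.aestronglyMeasurable, hmap,
      integral_smul_measure, ENNReal.toReal_ofReal (abs_nonneg _), smul_eq_mul]
  have h3 : ∫ w : Fin m → ℝ, g w = Real.sqrt (2 * π) ^ m := by
    rw [hgdef]
    beta_reduce
    rw [integral_fintype_prod_volume_eq_pow (ι := Fin m) (fun x => Real.exp (-(1/2) * x ^ 2))]
    rw [integral_gaussian (1/2)]
    rw [Fintype.card_fin]
    congr 1
    rw [show π / (1/2) = 2 * π by ring]
  have hfg' : (fun v : Fin m → ℝ => Real.exp (-(1/2) * (v ⬝ᵥ Q *ᵥ v)))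
      = fun v => g (Matrix.toLin' C v) := funext hfg
  constructor
  · rw [hfg']; exact h1
  · calc ∫ v : Fin m → ℝ, Real.exp (-(1/2) * (v ⬝ᵥ Q *ᵥ v))
        = ∫ v, g (Matrix.toLin' C v) := by rw [hfg']
    _ = |C.det⁻¹| * Real.sqrt (2 * π) ^ m := by rw [h2, h3]
    _ = Real.sqrt ((2 * π) ^ m / Q.det) := by
        have hpow : Real.sqrt ((2 * π) ^ m) = Real.sqrt (2 * π) ^ m := by
          have hh : ((2 * π : ℝ)) ^ m = (Real.sqrt (2 * π) ^ m) * (Real.sqrt (2 * π) ^ m) := by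
            rw [← mul_pow, Real.mul_self_sqrt (by positivity)]
          rw [hh, Real.sqrt_mul_self (by positivity)]
        rw [abs_inv, abs_of_nonneg hCdet_nonneg, ← hCdet,
          Real.sqrt_div (by positivity : (0:ℝ) ≤ (2 * π) ^ m), hpow, div_eq_mul_inv, mul_comm]

lemma continuous_quadform {m : ℕ} (A : Matrix (Fin m) (Fin m) ℝ) :
    Continuous (fun v : Fin m → ℝ => v ⬝ᵥ A *ᵥ v) := by
  simp only [dotProduct, Matrix.mulVec]
  apply continuous_finset_sum
  intro i _
  exact (continuous_apply i).mul
    (continuous_finset_sum _ fun j _ => continuous_const.mul (continuous_apply j))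

set_option maxHeartbeats 1000000 in
theorem gaussian_toeplitz_lower_tail (N M : ℕ) (hN : 1 ≤ N) (hM : 1 ≤ M)
    (a : Fin N → ℝ) (ha : a ≠ 0)
    (hP : (covToeplitz N M a).IsHermitian)
    (ν : Measure (Fin M → ℝ))
    (hν : ν = volume.withDensity (fun v => ENNReal.ofReal
      ((Real.sqrt ((2 * π) ^ M * (covToeplitz N M a).det))⁻¹ *
        Real.exp (-(1 / 2) * (v ⬝ᵥ (covToeplitz N M a)⁻¹ *ᵥ v))))) :
    ∀ ε ∈ Set.Ioo (0 : ℝ) 1,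
      ν {v | ∑ k, (v k) ^ 2 ≤ M * (∑ i, (a i) ^ 2) * (1 - ε)} ≤
        ENNReal.ofReal (Real.exp (-(ε ^ 2 * M) /
          (8 * ((∑ i, (hP.eigenvalues i) ^ 2) / (M * (∑ i, (a i) ^ 2) ^ 2))))) := by
  classical
  rintro ε ⟨hε0, hε1⟩
  set P := covToeplitz N M a with hPdef
  have hPD : P.PosDef := covToeplitz_posDef N M a ha
  have hPdetpos : (0:ℝ) < P.det := hPD.det_pos
  set σ2 : ℝ := ∑ i, a i ^ 2 with hσ2
  have hσ2pos : 0 < σ2 := by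
    rcases Function.ne_iff.1 ha with ⟨i, hi⟩
    exact Finset.sum_pos' (fun i _ => sq_nonneg _) ⟨i, Finset.mem_univ _, lt_of_le_of_ne (sq_nonneg _) (Ne.symm (pow_ne_zero 2 hi))⟩
  set lam : Fin M → ℝ := hP.eigenvalues with hlam
  have hlampos : ∀ i, 0 < lam i := fun i => hPD.eigenvalues_pos i
  set S2 : ℝ := ∑ i, lam i ^ 2 with hS2
  have hS2pos : 0 < S2 :=
    Finset.sum_pos (fun i _ => pow_pos (hlampos i) 2) ⟨⟨0, hM⟩, Finset.mem_univ _⟩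
  have hMpos : (0:ℝ) < (M:ℝ) := by exact_mod_cast hM
  set t : ℝ := ε * M * σ2 / (2 * S2) with ht
  have htpos : 0 < t := by positivity
  set C₀ : ℝ := (M:ℝ) * σ2 * (1 - ε) with hC0
  -- the matrix A = P⁻¹ + 2t•1
  set A : Matrix (Fin M) (Fin M) ℝ := P⁻¹ + (2*t) • (1 : Matrix (Fin M) (Fin M) ℝ) with hA
  have hsm : ((2*t) • (1 : Matrix (Fin M) (Fin M) ℝ)).PosSemidef := by
    refine Matrix.PosSemidef.of_dotProduct_mulVec_nonneg ?_ ?_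
    · simp [Matrix.IsHermitian, Matrix.conjTranspose_smul]
    · intro x
      rw [Matrix.smul_mulVec, Matrix.one_mulVec, dotProduct_smul, smul_eq_mul]
      have : 0 ≤ dotProduct (star x) x := by
        simpa using dotProduct_self_star_nonneg x
      positivity
  have hApd : A.PosDef := hPD.inv.add_posSemidef hsm
  have hAdetpos : (0:ℝ) < A.det := hApd.det_pos
  obtain ⟨hAint, hAval⟩ := gauss_integral_aux A hApd
  -- spectral facts
  have hspec := hP.spectral_theorem
  rw [Unitary.conjStarAlgAut_apply] at hspec
  have hUU : (hP.eigenvectorUnitary : Matrix (Fin M) (Fin M) ℝ) *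
      star (hP.eigenvectorUnitary : Matrix (Fin M) (Fin M) ℝ) = 1 :=
    Matrix.mem_unitaryGroup_iff.mp hP.eigenvectorUnitary.2
  have hUU' : star (hP.eigenvectorUnitary : Matrix (Fin M) (Fin M) ℝ) *
      (hP.eigenvectorUnitary : Matrix (Fin M) (Fin M) ℝ) = 1 :=
    Matrix.mem_unitaryGroup_iff'.mp hP.eigenvectorUnitary.2
  have hf : (RCLike.ofReal ∘ lam : Fin M → ℝ) = lam := by
    rw [RCLike.ofReal_real_eq_id, Function.id_comp]
  -- trace
  have hdiag0 : autocorr N a 0 = σ2 := by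
    unfold autocorr
    apply Finset.sum_congr rfl
    intro s _
    simp only [Nat.add_zero]
    rw [dif_pos s.isLt]
    simp only [Fin.eta]
    rw [← pow_two]
  have htrace : P.trace = (M:ℝ) * σ2 := by
    have h1 : ∀ i : Fin M, P i i = σ2 := by
      intro i
      show autocorr N a (Nat.dist i.1 i.1) = σ2
      rw [Nat.dist_self, hdiag0]
    rw [Matrix.trace]
    calc ∑ i, P.diag i = ∑ _i : Fin M, σ2 := Finset.sum_congr rfl fun i _ => h1 i
    _ = (M:ℝ) * σ2 := by rw [Finset.sum_const, Finset.card_univ, Fintype.card_fin,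
          nsmul_eq_mul]
  have hlamsum : ∑ i, lam i = (M:ℝ) * σ2 := by
    have h1 : P.trace = Matrix.trace ((hP.eigenvectorUnitary : Matrix (Fin M) (Fin M) ℝ) *
        Matrix.diagonal (RCLike.ofReal ∘ lam) *
        star (hP.eigenvectorUnitary : Matrix (Fin M) (Fin M) ℝ)) := by
      exact congrArg Matrix.trace hspec
    rw [Matrix.trace_mul_cycle, hUU', one_mul, Matrix.trace_diagonal] at h1
    rw [← htrace, h1]
    rw [hf]
  -- determinant product identity
  have hdetconj : ∀ B : Matrix (Fin M) (Fin M) ℝ,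
      Matrix.det ((hP.eigenvectorUnitary : Matrix (Fin M) (Fin M) ℝ) * B *
        star (hP.eigenvectorUnitary : Matrix (Fin M) (Fin M) ℝ)) = B.det := by
    intro B
    have h1 : Matrix.det (hP.eigenvectorUnitary : Matrix (Fin M) (Fin M) ℝ) *
        Matrix.det (star (hP.eigenvectorUnitary : Matrix (Fin M) (Fin M) ℝ)) = 1 := by
      rw [← Matrix.det_mul, hUU, Matrix.det_one]
    rw [Matrix.det_mul, Matrix.det_mul]
    linear_combination B.det * h1
  have honep : (1 : Matrix (Fin M) (Fin M) ℝ) + (2*t) • P =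
      (hP.eigenvectorUnitary : Matrix (Fin M) (Fin M) ℝ) *
        ((1 : Matrix (Fin M) (Fin M) ℝ) + (2*t) • Matrix.diagonal (RCLike.ofReal ∘ lam)) *
        star (hP.eigenvectorUnitary : Matrix (Fin M) (Fin M) ℝ) := by
    rw [Matrix.mul_add, Matrix.add_mul, Matrix.mul_one, hUU, Matrix.mul_smul,
      Matrix.smul_mul, ← hspec]
  have hdiagsum : (1 : Matrix (Fin M) (Fin M) ℝ) + (2*t) • Matrix.diagonal (RCLike.ofReal ∘ lam)
      = Matrix.diagonal (fun i => 1 + 2*t*lam i) := by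
    rw [hf, ← Matrix.diagonal_one, ← Matrix.diagonal_smul, ← Matrix.diagonal_add]
    congr 1
    all_goals funext i
    all_goals simp [smul_eq_mul]
  have hdet_prod : A.det * P.det = ∏ i, (1 + 2*t*lam i) := by
    have hAP : A * P = (1 : Matrix (Fin M) (Fin M) ℝ) + (2*t) • P := by
      rw [hA, Matrix.add_mul, Matrix.nonsing_inv_mul P hPD.det_pos.ne'.isUnit,
        Matrix.smul_mul, Matrix.one_mul]
    rw [← Matrix.det_mul, hAP, honep, hdetconj, hdiagsum, Matrix.det_diagonal]
  -- product lower bound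
  have hprod_ge : Real.exp (2*(t * ((M:ℝ)*σ2) - t^2 * S2)) ≤ ∏ i, (1 + 2*t*lam i) := by
    have hterm : ∀ i, Real.exp (2*t*lam i - (2*t*lam i)^2/2) ≤ 1 + 2*t*lam i :=
      fun i => exp_sub_half_sq_le _ (by have := hlampos i; positivity)
    calc Real.exp (2*(t * ((M:ℝ)*σ2) - t^2 * S2))
        = ∏ i, Real.exp (2*t*lam i - (2*t*lam i)^2/2) := by
          rw [← Real.exp_sum]
          congr 1
          have : ∀ i ∈ (univ : Finset (Fin M)),
              2*t*lam i - (2*t*lam i)^2/2 = 2*t*lam i - 2*t^2*lam i^2 := by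
            intro i _; ring
          rw [Finset.sum_congr rfl this, Finset.sum_sub_distrib, ← Finset.mul_sum,
            ← Finset.mul_sum, hlamsum, ← hS2]
          ring
    _ ≤ ∏ i, (1 + 2*t*lam i) :=
        Finset.prod_le_prod (fun i _ => (Real.exp_pos _).le) (fun i _ => hterm i)
  -- final real inequality
  set c : ℝ := (Real.sqrt ((2 * π) ^ M * P.det))⁻¹ with hc
  have hsqrtP : 0 < Real.sqrt ((2 * π) ^ M * P.det) :=
    Real.sqrt_pos.mpr (mul_pos (by positivity) hPdetpos)
  have hcpos : 0 < c := inv_pos.mpr hsqrtP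
  have hS2ne : S2 ≠ 0 := hS2pos.ne'
  have hσ2ne : σ2 ≠ 0 := hσ2pos.ne'
  have hMne : (M:ℝ) ≠ 0 := hMpos.ne'
  have hfinal : (c * Real.exp (t * C₀)) * Real.sqrt ((2 * π) ^ M / A.det) ≤
      Real.exp (-(ε ^ 2 * M) / (8 * (S2 / ((M:ℝ) * σ2 ^ 2)))) := by
    have n1 : Real.sqrt ((2*π)^M) ≠ 0 := by positivity
    have n2 : Real.sqrt P.det ≠ 0 := by positivity
    have n3 : Real.sqrt A.det ≠ 0 := by positivity
    have hc_eq : c * Real.sqrt ((2 * π) ^ M / A.det)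
        = (Real.sqrt (A.det * P.det))⁻¹ := by
      rw [hc, Real.sqrt_div (by positivity : (0:ℝ) ≤ (2*π)^M) A.det,
        Real.sqrt_mul (by positivity : (0:ℝ) ≤ (2*π)^M) P.det,
        Real.sqrt_mul hAdetpos.le P.det]
      field_simp
    have hsqrt_ge : Real.exp (t*((M:ℝ)*σ2) - t^2*S2) ≤ Real.sqrt (∏ i, (1 + 2*t*lam i)) := by
      have h1 := Real.sqrt_le_sqrt hprod_ge
      rwa [← Real.exp_half, show 2*(t * ((M:ℝ)*σ2) - t^2 * S2) / 2
        = t*((M:ℝ)*σ2) - t^2*S2 by ring] at h1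
    have hinv_le : (Real.sqrt (∏ i, (1 + 2*t*lam i)))⁻¹ ≤
        (Real.exp (t*((M:ℝ)*σ2) - t^2*S2))⁻¹ :=
      inv_anti₀ (Real.exp_pos _) hsqrt_ge
    have hexp_eq : t*C₀ - (t*((M:ℝ)*σ2) - t^2*S2) = -((ε*M*σ2)^2/S2)/4 := by
      rw [ht, hC0]
      field_simp
      ring
    have hrhs_eq : -(ε ^ 2 * M) / (8 * (S2 / ((M:ℝ) * σ2 ^ 2))) = -((ε*M*σ2)^2/S2)/8 := by
      field_simp
    have hXnn : 0 ≤ (ε*M*σ2)^2/S2 := by positivity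
    calc (c * Real.exp (t * C₀)) * Real.sqrt ((2 * π) ^ M / A.det)
        = Real.exp (t * C₀) * (c * Real.sqrt ((2 * π) ^ M / A.det)) := by ring
      _ = Real.exp (t * C₀) * (Real.sqrt (A.det * P.det))⁻¹ := by rw [hc_eq]
      _ = Real.exp (t * C₀) * (Real.sqrt (∏ i, (1 + 2*t*lam i)))⁻¹ := by rw [hdet_prod]
      _ ≤ Real.exp (t * C₀) * (Real.exp (t*((M:ℝ)*σ2) - t^2*S2))⁻¹ :=
          mul_le_mul_of_nonneg_left hinv_le (Real.exp_nonneg _)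
      _ = Real.exp (t*C₀ - (t*((M:ℝ)*σ2) - t^2*S2)) := by
          rw [← Real.exp_neg, ← Real.exp_add, ← sub_eq_add_neg]
      _ ≤ Real.exp (-(ε ^ 2 * M) / (8 * (S2 / ((M:ℝ) * σ2 ^ 2)))) := by
          rw [Real.exp_le_exp, hexp_eq, hrhs_eq]
          linarith
  -- quadratic identity
  have hqA : ∀ v : Fin M → ℝ, v ⬝ᵥ A *ᵥ v = v ⬝ᵥ P⁻¹ *ᵥ v + 2*t*∑ k, v k ^ 2 := by
    intro v
    rw [hA, Matrix.add_mulVec, dotProduct_add]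
    congr 1
    rw [Matrix.smul_mulVec, Matrix.one_mulVec, dotProduct_smul, smul_eq_mul]
    rw [show v ⬝ᵥ v = ∑ k, v k ^ 2 from by simp [dotProduct, pow_two]]
  -- measurable set
  have hScont : Continuous (fun v : Fin M → ℝ => ∑ k, v k ^ 2) :=
    continuous_finset_sum _ fun k _ => (continuous_apply k).pow 2
  have hSm : MeasurableSet {v : Fin M → ℝ | ∑ k, v k ^ 2 ≤ C₀} :=
    (isClosed_le hScont continuous_const).measurableSet
  -- the dominating function
  set h : (Fin M → ℝ) → ℝ :=
    fun v => (c * Real.exp (t * C₀)) * Real.exp (-(1/2) * (v ⬝ᵥ A *ᵥ v)) with hh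
  have hInt : Integrable h := hAint.const_mul _
  have hcont_h : Continuous h := by
    apply continuous_const.mul
    exact Real.continuous_exp.comp (continuous_const.mul (continuous_quadform A))
  have hnn : 0 ≤ᵐ[volume] h := ae_of_all _ fun v => by
    have := Real.exp_pos (-(1/2) * (v ⬝ᵥ A *ᵥ v))
    have := Real.exp_pos (t * C₀)
    positivity
  have hpt : ∀ v ∈ {v : Fin M → ℝ | ∑ k, v k ^ 2 ≤ C₀},
      ENNReal.ofReal (c * Real.exp (-(1/2) * (v ⬝ᵥ P⁻¹ *ᵥ v))) ≤ ENNReal.ofReal (h v) := by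
    intro v hv
    apply ENNReal.ofReal_le_ofReal
    have hEq : h v = c * Real.exp (-(1/2) * (v ⬝ᵥ P⁻¹ *ᵥ v)
        + (t * C₀ - t * ∑ k, v k ^ 2)) := by
      rw [hh]
      show c * Real.exp (t * C₀) * Real.exp (-(1/2) * (v ⬝ᵥ A *ᵥ v)) = _
      rw [hqA v, mul_assoc, ← Real.exp_add]
      congr 2
      ring
    rw [hEq]
    apply mul_le_mul_of_nonneg_left _ hcpos.le
    rw [Real.exp_le_exp]
    have hv' : ∑ k, v k ^ 2 ≤ C₀ := hv
    nlinarith [htpos.le]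
  have hIntval : ∫ v, h v = (c * Real.exp (t * C₀)) * Real.sqrt ((2 * π) ^ M / A.det) := by
    rw [hh]
    rw [MeasureTheory.integral_const_mul, hAval]
  -- main chain
  rw [hν, withDensity_apply _ hSm]
  calc ∫⁻ v in {v : Fin M → ℝ | ∑ k, v k ^ 2 ≤ C₀},
        ENNReal.ofReal (c * Real.exp (-(1/2) * (v ⬝ᵥ P⁻¹ *ᵥ v)))
      ≤ ∫⁻ v in {v : Fin M → ℝ | ∑ k, v k ^ 2 ≤ C₀}, ENNReal.ofReal (h v) :=
        setLIntegral_mono (ENNReal.measurable_ofReal.comp hcont_h.measurable) hpt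
    _ ≤ ∫⁻ v, ENNReal.ofReal (h v) := setLIntegral_le_lintegral _ _
    _ = ENNReal.ofReal (∫ v, h v) := (ofReal_integral_eq_lintegral_ofReal hInt hnn).symm
    _ ≤ ENNReal.ofReal (Real.exp (-(ε ^ 2 * M) / (8 * (S2 / ((M:ℝ) * σ2 ^ 2))))) := by
        apply ENNReal.ofReal_le_ofReal
        rw [hIntval]
        exact hfinal
end

section
/- Fix integers N, M ≥ 1 and 1 ≤ K ≤ N, set L = N+M−1, and let G ∈ ℝ^{N×N} be an orthogonal matrix. Then for every nonzero vector a ∈ ℝ^N of the form a = Gq with q ∈ ℝ^N having at most K nonzero entries, ρ(a) ≤ L ν_K(G)². -/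
open Finset Complex Matrix

/-- Entry of the unitary DFT matrix `F_L(ℓ,m) = (1/√L) e^{-2πjℓm/L}` (0-based indices). -/
noncomputable def dftEntry (L ℓ m : ℕ) : ℂ :=
  ((Real.sqrt L : ℝ) : ℂ)⁻¹ * Complex.exp (-(2 * Real.pi * Complex.I * (ℓ : ℂ) * (m : ℂ)) / (L : ℂ))

/-- `‖F^{i→}_{1:N} G_S‖₂`. -/
noncomputable def rowCohNorm (N M : ℕ) (G : Matrix (Fin N) (Fin N) ℝ)
    (i : Fin (N + M - 1)) (S : Finset (Fin N)) : ℝ :=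
  Real.sqrt (∑ s ∈ S,
    ‖∑ m : Fin N, dftEntry (N + M - 1) i.1 m.1 * (G m s : ℂ)‖ ^ 2)

/-- The `K`-sparse Fourier coherence `ν_K(G)`. -/
noncomputable def fourierCoherence (N M K : ℕ) (G : Matrix (Fin N) (Fin N) ℝ) : ℝ :=
  ⨆ i : Fin (N + M - 1), ⨆ S : {S : Finset (Fin N) // S.card = K}, rowCohNorm N M G i S.1


noncomputable def eC (L ℓ k : ℕ) : ℂ :=
  Complex.exp (-(2 * Real.pi * Complex.I * (ℓ : ℂ) * (k : ℂ)) / (L : ℂ))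

lemma eC_add (L ℓ i n : ℕ) : eC L ℓ (i + n) = eC L ℓ i * eC L ℓ n := by
  rw [eC, eC, eC, ← Complex.exp_add]
  congr 1
  push_cast
  ring

lemma conj_eC (L ℓ k : ℕ) :
    (starRingEnd ℂ) (eC L ℓ k) =
      Complex.exp ((2 * Real.pi * Complex.I * (ℓ : ℂ) * (k : ℂ)) / (L : ℂ)) := by
  rw [eC, ← Complex.exp_conj]
  congr 1
  simp [map_div₀, map_ofNat]

lemma orth_sum (L : ℕ) (hL : 0 < L) (d : ℤ) (hd : d.natAbs < L) :
    ∑ ℓ : Fin L, Complex.exp (2 * Real.pi * Complex.I * (ℓ : ℂ) * (d : ℂ) / (L : ℂ))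
      = if d = 0 then (L : ℂ) else 0 := by
  have hLC : (L : ℂ) ≠ 0 := Nat.cast_ne_zero.2 hL.ne'
  by_cases h0 : d = 0
  · simp [h0]
  · rw [if_neg h0]
    set ζ : ℂ := Complex.exp (2 * Real.pi * Complex.I * (d : ℂ) / (L : ℂ)) with hζ
    have hpow : ∀ ℓ : ℕ, Complex.exp (2 * Real.pi * Complex.I * (ℓ : ℂ) * (d : ℂ) / (L : ℂ)) = ζ ^ ℓ := by
      intro ℓ
      rw [hζ, ← Complex.exp_nat_mul]
      congr 1
      ring
    have hζL : ζ ^ L = 1 := by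
      rw [hζ, ← Complex.exp_nat_mul]
      have h : (L : ℂ) * (2 * Real.pi * Complex.I * (d : ℂ) / (L : ℂ)) = (d : ℂ) * (2 * Real.pi * Complex.I) := by
        field_simp
      rw [h, Complex.exp_int_mul_two_pi_mul_I]
    have hζ1 : ζ ≠ 1 := by
      intro hone
      rw [hζ, Complex.exp_eq_one_iff] at hone
      obtain ⟨n, hn⟩ := hone
      have h2πI : (2 * (Real.pi : ℂ) * Complex.I) ≠ 0 := by
        simp [Real.pi_ne_zero, Complex.I_ne_zero]
      have hd' : (d : ℂ) = (n : ℂ) * (L : ℂ) := by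
        field_simp at hn
        linear_combination hn
      have hdz : d = n * L := by exact_mod_cast hd'
      have hn0 : n ≠ 0 := by rintro rfl; simp at hdz; exact h0 hdz
      have habs : d.natAbs = n.natAbs * L := by
        rw [hdz, Int.natAbs_mul, Int.natAbs_natCast]
      have : 1 ≤ n.natAbs := Nat.one_le_iff_ne_zero.2 (Int.natAbs_ne_zero.2 hn0)
      nlinarith
    simp_rw [hpow]
    rw [Fin.sum_univ_eq_sum_range]
    rw [geom_sum_eq hζ1, hζL, sub_self, zero_div]


lemma parseval (L n : ℕ) (hL : 0 < L) (hn : n ≤ L) (x : Fin n → ℝ) :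
    ∑ ℓ : Fin L, Complex.normSq (∑ i : Fin n, (x i : ℂ) * eC L ℓ.1 i.1)
      = L * ∑ i : Fin n, x i ^ 2 := by
  have key : ((∑ ℓ : Fin L, Complex.normSq (∑ i : Fin n, (x i : ℂ) * eC L ℓ.1 i.1) : ℝ) : ℂ)
      = ((L * ∑ i : Fin n, x i ^ 2 : ℝ) : ℂ) := by
    push_cast
    calc (∑ ℓ : Fin L, (Complex.normSq (∑ i : Fin n, (x i : ℂ) * eC L ℓ.1 i.1) : ℂ))
        = ∑ ℓ : Fin L, (∑ i : Fin n, (x i : ℂ) * eC L ℓ.1 i.1) *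
            (starRingEnd ℂ) (∑ j : Fin n, (x j : ℂ) * eC L ℓ.1 j.1) := by
          refine Finset.sum_congr rfl fun ℓ _ => ?_
          rw [Complex.mul_conj]
      _ = ∑ ℓ : Fin L, ∑ i : Fin n, ∑ j : Fin n,
            (x i : ℂ) * (x j : ℂ) * Complex.exp (2 * Real.pi * Complex.I * (ℓ.1 : ℂ) * ((((j.1:ℤ) - (i.1:ℤ)) : ℤ) : ℂ) / (L : ℂ)) := by
          refine Finset.sum_congr rfl fun ℓ _ => ?_
          rw [map_sum, Finset.sum_mul_sum]
          refine Finset.sum_congr rfl fun i _ => Finset.sum_congr rfl fun j _ => ?_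
          rw [_root_.map_mul, Complex.conj_ofReal, conj_eC, eC, mul_mul_mul_comm, ← Complex.exp_add]
          have hc : ((((j.1:ℤ) - (i.1:ℤ)) : ℤ) : ℂ) = (j.1:ℂ) - (i.1:ℂ) := by push_cast; ring
          rw [hc]
          congr 1
          ring
      _ = ∑ i : Fin n, ∑ j : Fin n, (x i : ℂ) * (x j : ℂ) *
            (if ((j.1:ℤ) - (i.1:ℤ)) = 0 then (L:ℂ) else 0) := by
          rw [Finset.sum_comm]
          refine Finset.sum_congr rfl fun i _ => ?_
          rw [Finset.sum_comm]
          refine Finset.sum_congr rfl fun j _ => ?_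
          rw [← Finset.mul_sum, orth_sum L hL _ (by have := i.2; have := j.2; omega)]
      _ = (L:ℂ) * ∑ i : Fin n, (x i:ℂ)^2 := by
          rw [Finset.mul_sum]
          refine Finset.sum_congr rfl fun i _ => ?_
          rw [Finset.sum_eq_single i]
          · simp only [sub_self, if_pos rfl]
            simp
            ring
          · intro j _ hj
            rw [if_neg (fun h => hj (Fin.ext (by omega))), mul_zero]
          · intro h
            exact absurd (Finset.mem_univ i) h
  exact_mod_cast key



lemma autocorr_eq (N : ℕ) (a : Fin N → ℝ) (x y : ℕ) :
    (∑ n : Fin N, ∑ m : Fin N, if x + n.1 = y + m.1 then a n * a m else 0)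
      = autocorr N a (Nat.dist x y) := by
  rcases le_total x y with hxy | hxy
  · set τ := y - x with hτ
    have hd : Nat.dist x y = τ := by rw [Nat.dist_eq_sub_of_le hxy]
    rw [hd]
    rw [Finset.sum_comm]
    rw [autocorr]
    refine Finset.sum_congr rfl fun m _ => ?_
    by_cases h : m.1 + τ < N
    · rw [dif_pos h, Finset.sum_eq_single (⟨m.1 + τ, h⟩ : Fin N)]
      · rw [if_pos (by simp; omega)]
        ring
      · intro n _ hn
        rw [if_neg (fun hc => hn (Fin.ext (by simp; omega)))]
      · intro h'; exact absurd (Finset.mem_univ _) h'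
    · rw [dif_neg h]
      refine Finset.sum_eq_zero fun n _ => ?_
      rw [if_neg (by have := n.2; omega)]
  · set τ := x - y with hτ
    have hd : Nat.dist x y = τ := by rw [Nat.dist_comm, Nat.dist_eq_sub_of_le hxy]
    rw [hd, autocorr]
    refine Finset.sum_congr rfl fun n _ => ?_
    by_cases h : n.1 + τ < N
    · rw [dif_pos h, Finset.sum_eq_single (⟨n.1 + τ, h⟩ : Fin N)]
      · rw [if_pos (by simp; omega)]
      · intro m _ hm
        rw [if_neg (fun hc => hm (Fin.ext (by simp; omega)))]
      · intro h'; exact absurd (Finset.mem_univ _) h'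
    · rw [dif_neg h]
      refine Finset.sum_eq_zero fun m _ => ?_
      rw [if_neg (by have := m.2; omega)]

lemma sum_fin_ite {L : ℕ} (x y : ℕ) (hx : x < L) (c : ℝ) :
    (∑ k : Fin L, if x = k.1 then (if y = k.1 then c else 0) else 0)
      = if x = y then c else 0 := by
  rw [Finset.sum_eq_single (⟨x, hx⟩ : Fin L)]
  · show (if x = x then (if y = x then c else 0) else 0) = _
    rw [if_pos rfl]
    by_cases h : x = y
    · rw [if_pos h.symm, if_pos h]
    · rw [if_neg (Ne.symm h), if_neg h]
  · intro k _ hk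
    rw [if_neg (fun hc => hk (Fin.ext hc.symm))]
  · intro h'; exact absurd (Finset.mem_univ _) h'



lemma quad_eq_conv (N M : ℕ) (a : Fin N → ℝ) (v : Fin M → ℝ) :
    v ⬝ᵥ (covToeplitz N M a) *ᵥ v
      = ∑ k : Fin (N + M - 1), (∑ p : Fin M × Fin N,
          if p.1.1 + p.2.1 = k.1 then v p.1 * a p.2 else 0) ^ 2 := by
  classical
  have hLp : ∀ p : Fin M × Fin N, p.1.1 + p.2.1 < N + M - 1 := fun p => by
    have := p.1.2; have := p.2.2; omega
  have key : ∑ k : Fin (N + M - 1), (∑ p : Fin M × Fin N,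
        if p.1.1 + p.2.1 = k.1 then v p.1 * a p.2 else 0) ^ 2
      = ∑ p : Fin M × Fin N, ∑ r : Fin M × Fin N,
          if p.1.1 + p.2.1 = r.1.1 + r.2.1 then (v p.1 * a p.2) * (v r.1 * a r.2) else 0 := by
    have hsq : ∀ k : Fin (N + M - 1), (∑ p : Fin M × Fin N,
          if p.1.1 + p.2.1 = k.1 then v p.1 * a p.2 else 0) ^ 2
        = ∑ p : Fin M × Fin N, ∑ r : Fin M × Fin N,
            if p.1.1 + p.2.1 = k.1 then (if r.1.1 + r.2.1 = k.1
              then (v p.1 * a p.2) * (v r.1 * a r.2) else 0) else 0 := by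
      intro k
      rw [sq, Finset.sum_mul_sum]
      refine Finset.sum_congr rfl fun p _ => Finset.sum_congr rfl fun r _ => ?_
      split_ifs <;> simp
    simp_rw [hsq]
    rw [Finset.sum_comm]
    refine Finset.sum_congr rfl fun p _ => ?_
    rw [Finset.sum_comm]
    refine Finset.sum_congr rfl fun r _ => ?_
    exact sum_fin_ite _ _ (hLp p) _
  rw [key]
  calc v ⬝ᵥ (covToeplitz N M a) *ᵥ v
      = ∑ i : Fin M, ∑ j : Fin M, v i * v j * autocorr N a (Nat.dist i.1 j.1) := by
        simp_rw [dotProduct, Matrix.mulVec, dotProduct, covToeplitz, Finset.mul_sum]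
        exact Finset.sum_congr rfl fun i _ => Finset.sum_congr rfl fun j _ => by ring
    _ = ∑ i : Fin M, ∑ j : Fin M, ∑ n : Fin N, ∑ m : Fin N,
          (if i.1 + n.1 = j.1 + m.1 then (v i * a n) * (v j * a m) else 0) := by
        refine Finset.sum_congr rfl fun i _ => Finset.sum_congr rfl fun j _ => ?_
        rw [← autocorr_eq N a i.1 j.1, Finset.mul_sum]
        refine Finset.sum_congr rfl fun n _ => ?_
        rw [Finset.mul_sum]
        refine Finset.sum_congr rfl fun m _ => ?_
        rcases em (i.1 + n.1 = j.1 + m.1) with h | h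
        · rw [if_pos h, if_pos h]; ring
        · rw [if_neg h, if_neg h, mul_zero]
    _ = ∑ p : Fin M × Fin N, ∑ r : Fin M × Fin N,
          (if p.1.1 + p.2.1 = r.1.1 + r.2.1 then (v p.1 * a p.2) * (v r.1 * a r.2) else 0) := by
        simp_rw [Fintype.sum_prod_type]
        exact Finset.sum_congr rfl fun i _ => Finset.sum_comm



lemma conv_hat (N M : ℕ) (a : Fin N → ℝ) (v : Fin M → ℝ) (ℓ : ℕ) :
    (∑ k : Fin (N + M - 1), ((∑ p : Fin M × Fin N,
        if p.1.1 + p.2.1 = k.1 then v p.1 * a p.2 else 0 : ℝ) : ℂ) * eC (N + M - 1) ℓ k.1)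
      = (∑ i : Fin M, (v i : ℂ) * eC (N + M - 1) ℓ i.1)
        * (∑ n : Fin N, (a n : ℂ) * eC (N + M - 1) ℓ n.1) := by
  have hLp : ∀ p : Fin M × Fin N, p.1.1 + p.2.1 < N + M - 1 := fun p => by
    have := p.1.2; have := p.2.2; omega
  calc (∑ k : Fin (N + M - 1), ((∑ p : Fin M × Fin N,
        if p.1.1 + p.2.1 = k.1 then v p.1 * a p.2 else 0 : ℝ) : ℂ) * eC (N + M - 1) ℓ k.1)
      = ∑ k : Fin (N + M - 1), ∑ p : Fin M × Fin N,
          (if p.1.1 + p.2.1 = k.1 then ((v p.1 * a p.2 : ℝ) : ℂ) * eC (N + M - 1) ℓ k.1 else 0) := by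
        refine Finset.sum_congr rfl fun k _ => ?_
        rw [show ((∑ p : Fin M × Fin N, if p.1.1 + p.2.1 = k.1 then v p.1 * a p.2 else 0 : ℝ) : ℂ)
            = ∑ p : Fin M × Fin N, (if p.1.1 + p.2.1 = k.1 then ((v p.1 * a p.2 : ℝ) : ℂ) else 0) by
          push_cast [apply_ite (fun r : ℝ => (r : ℂ))]
          norm_num]
        rw [Finset.sum_mul]
        refine Finset.sum_congr rfl fun p _ => ?_
        split_ifs <;> simp
    _ = ∑ p : Fin M × Fin N, ∑ k : Fin (N + M - 1),
          (if p.1.1 + p.2.1 = k.1 then ((v p.1 * a p.2 : ℝ) : ℂ) * eC (N + M - 1) ℓ k.1 else 0) :=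
        Finset.sum_comm
    _ = ∑ p : Fin M × Fin N, ((v p.1 : ℂ) * eC (N + M - 1) ℓ p.1.1)
          * ((a p.2 : ℂ) * eC (N + M - 1) ℓ p.2.1) := by
        refine Finset.sum_congr rfl fun p _ => ?_
        rw [Finset.sum_eq_single (⟨p.1.1 + p.2.1, hLp p⟩ : Fin (N + M - 1))]
        · rw [if_pos rfl]
          show ((v p.1 * a p.2 : ℝ) : ℂ) * eC (N + M - 1) ℓ (p.1.1 + p.2.1) = _
          rw [eC_add]
          push_cast
          ring
        · intro k _ hk
          rw [if_neg (fun hc => hk (Fin.ext hc.symm))]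
        · intro h; exact absurd (Finset.mem_univ _) h
    _ = (∑ i : Fin M, (v i : ℂ) * eC (N + M - 1) ℓ i.1)
        * (∑ n : Fin N, (a n : ℂ) * eC (N + M - 1) ℓ n.1) := by
        rw [Finset.sum_mul_sum, Fintype.sum_prod_type]

theorem rho_deterministic_bound (N M K : ℕ) (hN : 1 ≤ N) (hM : 1 ≤ M)
    (hK1 : 1 ≤ K) (hKN : K ≤ N)
    (G : Matrix (Fin N) (Fin N) ℝ) (hG : Gᵀ * G = 1)
    (q : Fin N → ℝ)
    (hq : ∃ S : Finset (Fin N), S.card ≤ K ∧ ∀ i ∉ S, q i = 0)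
    (a : Fin N → ℝ) (haq : a = G.mulVec q) (ha : a ≠ 0)
    (hP : (covToeplitz N M a).IsHermitian) :
    (⨆ i, hP.eigenvalues i) / ∑ i, (a i) ^ 2 ≤
      ((N + M - 1 : ℕ) : ℝ) * fourierCoherence N M K G ^ 2 := by
  classical
  have hL : 0 < N + M - 1 := by omega
  set L := N + M - 1 with hLdef
  set ν := fourierCoherence N M K G with hνdef
  have hLR : (0 : ℝ) < (L : ℝ) := by exact_mod_cast hL
  haveI : Nonempty (Fin M) := ⟨⟨0, hM⟩⟩
  -- positivity of ‖a‖²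
  have hapos : 0 < ∑ i, a i ^ 2 := by
    obtain ⟨i, hi⟩ := Function.ne_iff.mp ha
    exact Finset.sum_pos' (fun j _ => sq_nonneg _) ⟨i, Finset.mem_univ i, pow_two_pos_of_ne_zero hi⟩
  -- norm preservation
  have hqa : ∑ i, q i ^ 2 = ∑ i, a i ^ 2 := by
    have h1 : a ⬝ᵥ a = q ⬝ᵥ q := by
      calc a ⬝ᵥ a = q ⬝ᵥ ((Gᵀ * G) *ᵥ q) := by
            rw [← Matrix.mulVec_mulVec, Matrix.dotProduct_mulVec q, Matrix.vecMul_transpose, haq]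
        _ = q ⬝ᵥ q := by rw [hG, Matrix.one_mulVec]
    simpa [dotProduct, sq] using h1.symm
  -- ν ≥ 0 and the key DFT row bound
  have hν0 : 0 ≤ ν := by
    obtain ⟨S, -, hScard⟩ := Finset.exists_subset_card_eq (by simpa using hKN :
      K ≤ (Finset.univ : Finset (Fin N)).card)
    have h1 : rowCohNorm N M G ⟨0, hL⟩ S ≤
        ⨆ S' : {S' : Finset (Fin N) // S'.card = K}, rowCohNorm N M G ⟨0, hL⟩ S'.1 :=
      le_ciSup (f := fun S' : {S' : Finset (Fin N) // S'.card = K} => rowCohNorm N M G ⟨0, hL⟩ S'.1)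
        (Set.Finite.bddAbove (Set.finite_range _)) ⟨S, hScard⟩
    have h2 : (⨆ S' : {S' : Finset (Fin N) // S'.card = K}, rowCohNorm N M G ⟨0, hL⟩ S'.1) ≤ ν :=
      le_ciSup (f := fun i : Fin (N + M - 1) => ⨆ S' : {S' : Finset (Fin N) // S'.card = K}, rowCohNorm N M G i S'.1)
        (Set.Finite.bddAbove (Set.finite_range _)) (⟨0, hL⟩ : Fin L)
    exact (Real.sqrt_nonneg _).trans (h1.trans h2)
  have hahat : ∀ ℓ : Fin L, Complex.normSq (∑ n : Fin N, (a n : ℂ) * eC L ℓ.1 n.1)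
      ≤ (L : ℝ) * ν ^ 2 * ∑ i, a i ^ 2 := by
    intro ℓ
    obtain ⟨S₀, hS₀K, hS₀⟩ := hq
    obtain ⟨S, hS₀S, -, hScard⟩ := Finset.exists_subsuperset_card_eq
      (Finset.subset_univ S₀) hS₀K (by simpa using hKN)
    set c : Fin N → ℂ := fun s => ∑ m : Fin N, dftEntry L ℓ.1 m.1 * (G m s : ℂ) with hc
    have hsqrt : ((Real.sqrt L : ℝ) : ℂ) ≠ 0 := by
      simp only [ne_eq, Complex.ofReal_eq_zero]
      positivity
    have hdft : ∀ m : Fin N, eC L ℓ.1 m.1 = ((Real.sqrt L : ℝ) : ℂ) * dftEntry L ℓ.1 m.1 := by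
      intro m
      rw [dftEntry, eC, ← mul_assoc, mul_inv_cancel₀ hsqrt, one_mul]
    have hT : (∑ n : Fin N, (a n : ℂ) * eC L ℓ.1 n.1)
        = ((Real.sqrt L : ℝ) : ℂ) * ∑ s ∈ S, (q s : ℂ) * c s := by
      calc (∑ n : Fin N, (a n : ℂ) * eC L ℓ.1 n.1)
          = ((Real.sqrt L : ℝ) : ℂ) * ∑ n : Fin N, dftEntry L ℓ.1 n.1 * (a n : ℂ) := by
            rw [Finset.mul_sum]
            exact Finset.sum_congr rfl fun n _ => by rw [hdft n]; ring
        _ = ((Real.sqrt L : ℝ) : ℂ) * ∑ s : Fin N, (q s : ℂ) * c s := by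
            congr 1
            calc (∑ n : Fin N, dftEntry L ℓ.1 n.1 * (a n : ℂ))
                = ∑ n : Fin N, ∑ s : Fin N, dftEntry L ℓ.1 n.1 * ((G n s : ℂ) * (q s : ℂ)) := by
                  refine Finset.sum_congr rfl fun n _ => ?_
                  rw [haq]
                  show dftEntry L ℓ.1 n.1 * ((G *ᵥ q) n : ℂ) = _
                  rw [Matrix.mulVec, dotProduct]
                  push_cast
                  rw [Finset.mul_sum]
              _ = ∑ s : Fin N, (q s : ℂ) * c s := by
                  rw [Finset.sum_comm]
                  refine Finset.sum_congr rfl fun s _ => ?_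
                  rw [hc, Finset.mul_sum]
                  exact Finset.sum_congr rfl fun n _ => by ring
        _ = ((Real.sqrt L : ℝ) : ℂ) * ∑ s ∈ S, (q s : ℂ) * c s := by
            congr 1
            refine (Finset.sum_subset (Finset.subset_univ S) ?_).symm
            intro s _ hs
            rw [hS₀ s (fun hmem => hs (hS₀S hmem))]
            simp
    have hRS : Real.sqrt (∑ s ∈ S, ‖c s‖ ^ 2) ≤ ν := by
      have h1 : rowCohNorm N M G ℓ S ≤
          ⨆ S' : {S' : Finset (Fin N) // S'.card = K}, rowCohNorm N M G ℓ S'.1 :=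
        le_ciSup (f := fun S' : {S' : Finset (Fin N) // S'.card = K} => rowCohNorm N M G ℓ S'.1)
          (Set.Finite.bddAbove (Set.finite_range _)) ⟨S, hScard⟩
      have h2 : (⨆ S' : {S' : Finset (Fin N) // S'.card = K}, rowCohNorm N M G ℓ S'.1) ≤ ν :=
        le_ciSup (f := fun i : Fin (N + M - 1) => ⨆ S' : {S' : Finset (Fin N) // S'.card = K}, rowCohNorm N M G i S'.1)
          (Set.Finite.bddAbove (Set.finite_range _)) ℓ
      exact h1.trans h2
    have hA0 : (0 : ℝ) ≤ ∑ s ∈ S, q s ^ 2 := Finset.sum_nonneg fun s _ => sq_nonneg _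
    have habs : ‖∑ s ∈ S, (q s : ℂ) * c s‖
        ≤ Real.sqrt (∑ s ∈ S, q s ^ 2) * Real.sqrt (∑ s ∈ S, ‖c s‖ ^ 2) := by
      calc ‖∑ s ∈ S, (q s : ℂ) * c s‖
          ≤ ∑ s ∈ S, ‖(q s : ℂ) * c s‖ := norm_sum_le _ _
        _ = ∑ s ∈ S, |q s| * ‖c s‖ := by
            refine Finset.sum_congr rfl fun s _ => ?_
            rw [norm_mul, Complex.norm_real, Real.norm_eq_abs]
        _ ≤ Real.sqrt (∑ s ∈ S, q s ^ 2) * Real.sqrt (∑ s ∈ S, ‖c s‖ ^ 2) := by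
            rw [← Real.sqrt_mul hA0]
            refine Real.le_sqrt_of_sq_le ?_
            calc (∑ s ∈ S, |q s| * ‖c s‖) ^ 2
                ≤ (∑ s ∈ S, |q s| ^ 2) * (∑ s ∈ S, ‖c s‖ ^ 2) :=
                  Finset.sum_mul_sq_le_sq_mul_sq S _ _
              _ = (∑ s ∈ S, q s ^ 2) * (∑ s ∈ S, ‖c s‖ ^ 2) := by
                  simp [_root_.sq_abs]
    have h2 : Complex.normSq (∑ s ∈ S, (q s : ℂ) * c s) ≤ (∑ i, a i ^ 2) * ν ^ 2 := by
      rw [← Complex.sq_norm]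
      calc ‖∑ s ∈ S, (q s : ℂ) * c s‖ ^ 2
          ≤ (Real.sqrt (∑ s ∈ S, q s ^ 2) * Real.sqrt (∑ s ∈ S, ‖c s‖ ^ 2)) ^ 2 :=
            pow_le_pow_left₀ (norm_nonneg _) habs 2
        _ = (∑ s ∈ S, q s ^ 2) * Real.sqrt (∑ s ∈ S, ‖c s‖ ^ 2) ^ 2 := by
            rw [mul_pow, Real.sq_sqrt hA0]
        _ ≤ (∑ s ∈ S, q s ^ 2) * ν ^ 2 :=
            mul_le_mul_of_nonneg_left (pow_le_pow_left₀ (Real.sqrt_nonneg _) hRS 2) hA0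
        _ ≤ (∑ i, a i ^ 2) * ν ^ 2 := by
            refine mul_le_mul_of_nonneg_right ?_ (sq_nonneg ν)
            rw [← hqa]
            exact Finset.sum_le_sum_of_subset_of_nonneg (Finset.subset_univ S)
              (fun i _ _ => sq_nonneg _)
    rw [hT, Complex.normSq_mul]
    have h3 : Complex.normSq ((Real.sqrt L : ℝ) : ℂ) = (L : ℝ) := by
      rw [Complex.normSq_ofReal, Real.mul_self_sqrt hLR.le]
    rw [h3]
    calc (L : ℝ) * Complex.normSq (∑ s ∈ S, (q s : ℂ) * c s)
        ≤ (L : ℝ) * ((∑ i, a i ^ 2) * ν ^ 2) := mul_le_mul_of_nonneg_left h2 hLR.le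
      _ = (L : ℝ) * ν ^ 2 * ∑ i, a i ^ 2 := by ring
  -- main chain
  rw [div_le_iff₀ hapos]
  refine ciSup_le fun t => ?_
  set v : Fin M → ℝ := ⇑(hP.eigenvectorBasis t) with hv
  have hv1 : ∑ i, v i ^ 2 = 1 := by
    have hnorm : ‖hP.eigenvectorBasis t‖ = 1 := hP.eigenvectorBasis.orthonormal.1 t
    rw [EuclideanSpace.norm_eq, Real.sqrt_eq_one] at hnorm
    simpa [Real.norm_eq_abs, _root_.sq_abs] using hnorm
  have hdot : v ⬝ᵥ v = 1 := by
    rw [dotProduct, ← hv1]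
    exact Finset.sum_congr rfl fun i _ => (pow_two (v i)).symm
  have hev : hP.eigenvalues t = v ⬝ᵥ (covToeplitz N M a) *ᵥ v := by
    rw [hv, hP.mulVec_eigenvectorBasis, dotProduct_smul, smul_eq_mul, ← hv, hdot, mul_one]
  rw [hev, quad_eq_conv N M a v]
  -- Parseval
  set w : Fin L → ℝ := fun k => ∑ p : Fin M × Fin N,
    if p.1.1 + p.2.1 = k.1 then v p.1 * a p.2 else 0 with hw
  have hPw : ∑ ℓ : Fin L, Complex.normSq (∑ k : Fin L, (w k : ℂ) * eC L ℓ.1 k.1)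
      = (L : ℝ) * ∑ k, w k ^ 2 := parseval L L hL le_rfl w
  have hPv : ∑ ℓ : Fin L, Complex.normSq (∑ i : Fin M, (v i : ℂ) * eC L ℓ.1 i.1)
      = (L : ℝ) * ∑ i, v i ^ 2 := parseval L M hL (by omega) v
  have hkey : (L : ℝ) * ∑ k, w k ^ 2 ≤ (L : ℝ) * ((L : ℝ) * ν ^ 2 * ∑ i, a i ^ 2) := by
    calc (L : ℝ) * ∑ k, w k ^ 2
        = ∑ ℓ : Fin L, Complex.normSq (∑ k : Fin L, (w k : ℂ) * eC L ℓ.1 k.1) := hPw.symm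
      _ = ∑ ℓ : Fin L, Complex.normSq (∑ i : Fin M, (v i : ℂ) * eC L ℓ.1 i.1)
            * Complex.normSq (∑ n : Fin N, (a n : ℂ) * eC L ℓ.1 n.1) := by
          refine Finset.sum_congr rfl fun ℓ _ => ?_
          rw [show (∑ k : Fin L, (w k : ℂ) * eC L ℓ.1 k.1)
              = (∑ i : Fin M, (v i : ℂ) * eC L ℓ.1 i.1)
                * (∑ n : Fin N, (a n : ℂ) * eC L ℓ.1 n.1) from conv_hat N M a v ℓ.1,
            Complex.normSq_mul]
      _ ≤ ∑ ℓ : Fin L, Complex.normSq (∑ i : Fin M, (v i : ℂ) * eC L ℓ.1 i.1)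
            * ((L : ℝ) * ν ^ 2 * ∑ i, a i ^ 2) :=
          Finset.sum_le_sum fun ℓ _ =>
            mul_le_mul_of_nonneg_left (hahat ℓ) (Complex.normSq_nonneg _)
      _ = ((L : ℝ) * ∑ i, v i ^ 2) * ((L : ℝ) * ν ^ 2 * ∑ i, a i ^ 2) := by
          rw [← Finset.sum_mul, hPv]
      _ = (L : ℝ) * ((L : ℝ) * ν ^ 2 * ∑ i, a i ^ 2) := by rw [hv1]; ring
  exact le_of_mul_le_mul_left hkey hLR
end
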